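/- Let M : U ⊕ V → U ⊕ V with blocks [[P, Q], [R, S]] such that I - P is invertible and I - (S + R (I - P)⁻¹ Q) is invertible. Then I - M is invertible, and moreover (I - M)⁻¹ restricted and computed via the Banachiewicz block-inverse formula yields: for any extension τ = [[M, B], [C, D]] : U ⊕ V ⊕ K → U ⊕ V ⊕ L, we have D + [C₁ C₂] (I - M)⁻¹ [B₁; B₂] = D' + C'(I - P')⁻¹ B', where [[P', B'], [C', D']] are the blocks of the operator obtained by first eliminating U: P' = S + R(I - P)⁻¹Q, B' = B₂ + R(I - P)⁻¹B₁, C' = C₂ + C₁(I - P)⁻¹Q, D' = D + C₁(I - P)⁻¹B₁. -/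

import Mathlib

open Matrix

/-- Successive feedback (vanishing) identity via the Banachiewicz formula. -/
theorem stmt7 {u v k l : ℕ}
    (P : Matrix (Fin u) (Fin u) ℂ) (Q : Matrix (Fin u) (Fin v) ℂ)
    (R : Matrix (Fin v) (Fin u) ℂ) (S : Matrix (Fin v) (Fin v) ℂ)
    (B₁ : Matrix (Fin u) (Fin k) ℂ) (B₂ : Matrix (Fin v) (Fin k) ℂ)
    (C₁ : Matrix (Fin l) (Fin u) ℂ) (C₂ : Matrix (Fin l) (Fin v) ℂ)
    (D : Matrix (Fin l) (Fin k) ℂ)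
    (hP : IsUnit (1 - P)) (hS : IsUnit (1 - (S + R * (1 - P)⁻¹ * Q))) :
    IsUnit (1 - fromBlocks P Q R S) ∧
    D + fromCols C₁ C₂ * (1 - fromBlocks P Q R S)⁻¹ * fromRows B₁ B₂ =
      (D + C₁ * (1 - P)⁻¹ * B₁) +
        (C₂ + C₁ * (1 - P)⁻¹ * Q) * (1 - (S + R * (1 - P)⁻¹ * Q))⁻¹ *
          (B₂ + R * (1 - P)⁻¹ * B₁) := by
  have hA : Invertible (1 - P) := hP.invertible
  have hschur : (1 - S) - (-R) * ⅟(1 - P) * (-Q) = 1 - (S + R * (1 - P)⁻¹ * Q) := by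
    rw [Matrix.invOf_eq_nonsing_inv]; simp only [Matrix.neg_mul, Matrix.mul_neg, neg_neg, sub_sub]
  have hW : Invertible ((1 - S) - (-R) * ⅟(1 - P) * (-Q)) := by
    rw [hschur]; exact hS.invertible
  have hblk : (1 : Matrix (Fin u ⊕ Fin v) (Fin u ⊕ Fin v) ℂ) - fromBlocks P Q R S
      = fromBlocks (1 - P) (-Q) (-R) (1 - S) := by
    rw [sub_eq_add_neg, ← fromBlocks_one, fromBlocks_neg, fromBlocks_add]
    simp [sub_eq_add_neg]
  have hInv : Invertible (1 - fromBlocks P Q R S) := by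
    rw [hblk]; exact fromBlocks₁₁Invertible _ _ _ _
  refine ⟨isUnit_of_invertible _, ?_⟩
  have hInv2 : Invertible (fromBlocks (1 - P) (-Q) (-R) (1 - S)) := hblk ▸ hInv
  rw [hblk, ← Matrix.invOf_eq_nonsing_inv, invOf_fromBlocks₁₁_eq, fromCols_mul_fromBlocks,
    fromCols_mul_fromRows]
  have e1 : ⅟(1 - P) = (1 - P)⁻¹ := Matrix.invOf_eq_nonsing_inv _
  have e2 : ⅟((1 - S) - (-R) * ⅟(1 - P) * (-Q)) = (1 - (S + R * (1 - P)⁻¹ * Q))⁻¹ := by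
    rw [Matrix.invOf_eq_nonsing_inv, hschur]
  rw [e2, e1]
  simp only [Matrix.add_mul, Matrix.mul_add, Matrix.mul_neg, Matrix.neg_mul, neg_neg,
    Matrix.mul_assoc]
  abel
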